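/- The square of the Bell operator satisfies B² = 4·I₄ − [a₁,b₁]⊗[a₂,b₂], where [x,y] = xy − yx is the commutator. -/
import Mathlib

open Matrix Kronecker

private lemma sub_kron (A B C : Matrix (Fin 2) (Fin 2) ℂ) :
    (A - B) ⊗ₖ C = A ⊗ₖ C - B ⊗ₖ C := by
  ext ⟨i,j⟩ ⟨k,l⟩; simp [Matrix.kronecker_apply, sub_mul]

private lemma kron_sub (A B C : Matrix (Fin 2) (Fin 2) ℂ) :
    A ⊗ₖ (B - C) = A ⊗ₖ B - A ⊗ₖ C := by
  ext ⟨i,j⟩ ⟨k,l⟩; simp [Matrix.kronecker_apply, mul_sub]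

theorem bell_operator_sq (a₁ b₁ a₂ b₂ : Matrix (Fin 2) (Fin 2) ℂ)
    (ha₁ : a₁.IsHermitian) (hb₁ : b₁.IsHermitian)
    (ha₂ : a₂.IsHermitian) (hb₂ : b₂.IsHermitian)
    (ha₁sq : a₁ * a₁ = 1) (hb₁sq : b₁ * b₁ = 1)
    (ha₂sq : a₂ * a₂ = 1) (hb₂sq : b₂ * b₂ = 1) :
    let B := a₁ ⊗ₖ a₂ + a₁ ⊗ₖ b₂ + b₁ ⊗ₖ a₂ - b₁ ⊗ₖ b₂
    B * B = (4 : ℂ) • (1 : Matrix (Fin 2 × Fin 2) (Fin 2 × Fin 2) ℂ)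
      - (a₁ * b₁ - b₁ * a₁) ⊗ₖ (a₂ * b₂ - b₂ * a₂) := by
  intro B
  have key : ∀ (x y u v : Matrix (Fin 2) (Fin 2) ℂ),
      (x ⊗ₖ u) * (y ⊗ₖ v) = (x * y) ⊗ₖ (u * v) := fun x y u v =>
    (Matrix.mul_kronecker_mul x y u v).symm
  have hB : B = a₁ ⊗ₖ a₂ + a₁ ⊗ₖ b₂ + b₁ ⊗ₖ a₂ - b₁ ⊗ₖ b₂ := rfl
  rw [hB]
  simp only [add_mul, sub_mul, mul_add, mul_sub, key, ha₁sq, hb₁sq, ha₂sq, hb₂sq]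
  simp only [sub_kron, kron_sub, Matrix.add_kronecker, Matrix.kronecker_add,
    Matrix.one_kronecker_one]
  have h4 : (4:ℂ) • (1 : Matrix (Fin 2 × Fin 2) (Fin 2 × Fin 2) ℂ) = 1 + 1 + 1 + 1 := by
    rw [show (4:ℂ) = 1+1+1+1 by norm_num]
    simp [add_smul]
  rw [h4]
  abel
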